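/- In the ternary Grassmann algebra G_N, the ℂ-subspace spanned by all ternary products θ a * θ b * θ c (a, b, c ranging over all indices) has dimension (N³ − N)/3. -/

import Mathlib

/-- The ternary commutation relations on the free `ℂ`-algebra on `N` generators.
`RingQuot (ternaryRel j N)` is the ternary Grassmann algebra `G_N`: the quotient of
the free algebra by the two-sided ideal generated by the elements
`X a * X b * X c − j • (X b * X c * X a)`. -/
inductive ternaryRel (j : ℂ) (N : ℕ) :
    FreeAlgebra ℂ (Fin N) → FreeAlgebra ℂ (Fin N) → Prop
  | rel (a b c : Fin N) : ternaryRel j N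
      (FreeAlgebra.ι ℂ a * FreeAlgebra.ι ℂ b * FreeAlgebra.ι ℂ c)
      (j • (FreeAlgebra.ι ℂ b * FreeAlgebra.ι ℂ c * FreeAlgebra.ι ℂ a))

/-- The generator `θ a` of the ternary Grassmann algebra, i.e. the image of `X a`. -/
noncomputable def theta (j : ℂ) (N : ℕ) (a : Fin N) : RingQuot (ternaryRel j N) :=
  RingQuot.mkAlgHom ℂ (ternaryRel j N) (FreeAlgebra.ι ℂ a)

namespace TernaryAux

variable {N : ℕ}

abbrev T (N : ℕ) := Fin N × Fin N × Fin N

def rot (t : T N) : T N := (t.2.1, t.2.2, t.1)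

def diag (t : T N) : Prop := t.1 = t.2.1 ∧ t.2.1 = t.2.2

instance : DecidablePred (diag (N := N)) := fun _ => inferInstanceAs (Decidable (_ ∧ _))

lemma rot_rot_rot (t : T N) : rot (rot (rot t)) = t := rfl

lemma diag_rot (t : T N) : diag (rot t) ↔ diag t := by
  constructor <;> rintro ⟨h1, h2⟩
  · exact ⟨h2.symm.trans h1.symm, h1⟩
  · exact ⟨h2, h2.symm.trans h1.symm⟩

lemma rot_eq_self {t : T N} (h : rot t = t) : diag t := by
  obtain ⟨a, b, c⟩ := t
  simp only [rot, Prod.mk.injEq] at h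
  exact ⟨h.1.symm, h.2.1.symm⟩

lemma rotrot_eq_self {t : T N} (h : rot (rot t) = t) : diag t := by
  obtain ⟨a, b, c⟩ := t
  simp only [rot, Prod.mk.injEq] at h
  exact ⟨h.2.1, h.2.2⟩

/-- injective encoding of triples into ℕ -/
def enc (t : T N) : ℕ :=
  (((Equiv.prodCongr (Equiv.refl (Fin N)) finProdFinEquiv).trans finProdFinEquiv) t : Fin (N * (N * N))).val

lemma enc_injective : Function.Injective (enc (N := N)) :=
  Fin.val_injective.comp (Equiv.injective _)

/-- the minimal element (w.r.t. enc) of the cyclic orbit of t -/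
def omin (t : T N) : T N :=
  if enc t ≤ enc (rot t) then
    (if enc t ≤ enc (rot (rot t)) then t else rot (rot t))
  else
    (if enc (rot t) ≤ enc (rot (rot t)) then rot t else rot (rot t))

lemma omin_mem (t : T N) : omin t = t ∨ omin t = rot t ∨ omin t = rot (rot t) := by
  unfold omin; split_ifs <;> tauto

lemma omin_le (t : T N) :
    enc (omin t) ≤ enc t ∧ enc (omin t) ≤ enc (rot t) ∧ enc (omin t) ≤ enc (rot (rot t)) := by
  unfold omin; split_ifs <;> omega

lemma omin_rot {t : T N} : omin (rot t) = omin t := by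
  have h3 : rot (rot (rot t)) = t := rot_rot_rot t
  have hm1 := omin_mem t
  have hm2 := omin_mem (rot t)
  have hl1 := omin_le t
  have hl2 := omin_le (rot t)
  rw [h3] at hm2 hl2
  apply enc_injective
  rcases hm1 with h | h | h <;> rcases hm2 with h' | h' | h' <;>
    rw [h] at hl1 <;> rw [h'] at hl2 <;> rw [h, h'] <;> omega

lemma omin_idem {t : T N} : omin (omin t) = omin t := by
  rcases omin_mem t with h | h | h <;> rw [h] <;>
    first
      | exact h
      | (rw [omin_rot]; exact h)
      | (rw [omin_rot, omin_rot]; exact h)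

/-- the set of orbit representatives among non-diagonal triples -/
def S (N : ℕ) : Finset (T N) :=
  Finset.univ.filter (fun t => ¬ diag t ∧ omin t = t)

lemma mem_S {t : T N} : t ∈ S N ↔ ¬ diag t ∧ omin t = t := by
  simp [S]

lemma rot_ne_of_not_diag {t : T N} (h : ¬ diag t) :
    rot t ≠ t ∧ rot (rot t) ≠ t ∧ rot t ≠ rot (rot t) := by
  refine ⟨fun hc => h (rot_eq_self hc), fun hc => h (rotrot_eq_self hc), fun hc => ?_⟩
  exact h ((diag_rot t).mp (rot_eq_self hc.symm))

lemma not_diag_omin {t : T N} (h : ¬ diag t) : ¬ diag (omin t) := by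
  rcases omin_mem t with h' | h' | h' <;> rw [h'] <;> simp [diag_rot, h]

def rotk (k : Fin 3) (t : T N) : T N :=
  if k.val = 0 then t else if k.val = 1 then rot t else rot (rot t)

lemma omin_rotk (k : Fin 3) (t : T N) : omin (rotk k t) = omin t := by
  fin_cases k <;> simp [rotk, omin_rot]

lemma not_diag_rotk (k : Fin 3) {t : T N} (h : ¬ diag t) : ¬ diag (rotk k t) := by
  fin_cases k <;> simpa [rotk, diag_rot]

lemma rotk_inj {s : T N} (h : ¬ diag s) {k k' : Fin 3} (hk : rotk k s = rotk k' s) : k = k' := by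
  obtain ⟨hn1, hn2, hn3⟩ := rot_ne_of_not_diag h
  fin_cases k <;> fin_cases k' <;> simp only [rotk, Fin.isValue] at hk <;>
    norm_num at hk <;>
    first
      | rfl
      | exact absurd hk hn1
      | exact absurd hk.symm hn1
      | exact absurd hk hn2
      | exact absurd hk.symm hn2
      | exact absurd hk hn3
      | exact absurd hk.symm hn3

lemma card_S (N : ℕ) : 3 * (S N).card = N ^ 3 - N := by
  classical
  have hdiag : Fintype.card {t : T N // diag t} = N := by
    have hb : Function.Bijective (fun a : Fin N => (⟨(a, a, a), ⟨rfl, rfl⟩⟩ : {t : T N // diag t})) := by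
      constructor
      · intro a b hab
        simpa [Subtype.ext_iff, Prod.ext_iff] using hab
      · rintro ⟨⟨a, b, c⟩, ⟨h1, h2⟩⟩
        simp only at h1 h2
        subst h1; subst h2
        exact ⟨a, rfl⟩
    simpa using (Fintype.card_of_bijective hb).symm
  have hT : Fintype.card (T N) = N ^ 3 := by
    simp [Fintype.card_prod]; ring
  have hnd : Fintype.card {t : T N // ¬ diag t} = N ^ 3 - N := by
    rw [Fintype.card_subtype_compl, hdiag, hT]
  have hbij : Function.Bijective
      (fun p : (S N) × Fin 3 => (⟨rotk p.2 p.1.val,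
        not_diag_rotk p.2 (mem_S.mp p.1.2).1⟩ : {t : T N // ¬ diag t})) := by
    constructor
    · rintro ⟨⟨s, hs⟩, k⟩ ⟨⟨s', hs'⟩, k'⟩ h
      simp only [Subtype.ext_iff] at h
      have hs1 := mem_S.mp hs
      have hs'1 := mem_S.mp hs'
      have hss' : s = s' := by
        have h2 := congrArg omin h
        rwa [omin_rotk, omin_rotk, hs1.2, hs'1.2] at h2
      subst hss'
      have hkk' : k = k' := rotk_inj hs1.1 h
      simp [hkk']
    · rintro ⟨t, ht⟩
      have hmem : omin t ∈ S N := mem_S.mpr ⟨not_diag_omin ht, omin_idem⟩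
      rcases omin_mem t with h | h | h
      · exact ⟨⟨⟨omin t, hmem⟩, 0⟩, Subtype.ext (by simp [rotk, h])⟩
      · refine ⟨⟨⟨omin t, hmem⟩, 2⟩, Subtype.ext ?_⟩
        show rotk 2 (omin t) = t
        rw [h]; simp [rotk, rot_rot_rot]
      · refine ⟨⟨⟨omin t, hmem⟩, 1⟩, Subtype.ext ?_⟩
        show rotk 1 (omin t) = t
        rw [h]; simp [rotk, rot_rot_rot]
  have hc := Fintype.card_of_bijective hbij
  rw [hnd] at hc
  simpa [Fintype.card_prod, Fintype.card_coe, mul_comm] using hc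
abbrev V (N : ℕ) := ℂ × (Fin N → ℂ) × ((Fin N × Fin N) → ℂ) × (T N → ℂ)

/-- the model operator for a generator -/
def M (j : ℂ) {N : ℕ} (a : Fin N) : V N →ₗ[ℂ] V N where
  toFun v :=
    (0,
     fun b => if a = b then v.1 else 0,
     fun p => if a = p.1 then v.2.1 p.2 else 0,
     fun t => (if a = t.1 then v.2.2.1 (t.2.1, t.2.2) else 0)
            + j * (if a = t.2.2 then v.2.2.1 (t.1, t.2.1) else 0)
            + j ^ 2 * (if a = t.2.1 then v.2.2.1 (t.2.2, t.1) else 0))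
  map_add' x y := by
    refine Prod.ext (by simp) (Prod.ext ?_ (Prod.ext ?_ ?_)) <;> funext i <;>
      simp only [Prod.fst_add, Prod.snd_add, Pi.add_apply] <;> split_ifs <;> ring
  map_smul' c x := by
    refine Prod.ext (by simp) (Prod.ext ?_ (Prod.ext ?_ ?_)) <;> funext i <;>
      simp only [Prod.smul_fst, Prod.smul_snd, Pi.smul_apply, smul_eq_mul, RingHom.id_apply] <;>
      split_ifs <;> ring

variable {j : ℂ}

lemma ite_rot (P Q R : Prop) [Decidable P] [Decidable Q] [Decidable R] (x : ℂ) :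
    (if P then (if Q then (if R then x else 0) else 0) else 0)
      = (if R then (if P then (if Q then x else 0) else 0) else 0) := by
  split_ifs <;> rfl

lemma M_rel (hj : j ^ 3 = 1) (a b c : Fin N) :
    M j a * M j b * M j c = j • (M j b * M j c * M j a) := by
  apply LinearMap.ext
  intro v
  show (M j a) ((M j b) ((M j c) v)) = j • (M j b) ((M j c) ((M j a) v))
  refine Prod.ext ?_ (Prod.ext ?_ (Prod.ext ?_ ?_))
  · simp [M]
  · funext i
    simp only [M, LinearMap.coe_mk, AddHom.coe_mk, Prod.smul_snd, Prod.smul_fst, Pi.smul_apply,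
      smul_eq_mul]
    split_ifs <;> ring
  · funext i
    simp only [M, LinearMap.coe_mk, AddHom.coe_mk, Prod.smul_snd, Prod.smul_fst, Pi.smul_apply,
      smul_eq_mul]
    split_ifs <;> ring
  · funext t
    simp only [M, LinearMap.coe_mk, AddHom.coe_mk, Prod.smul_snd, Pi.smul_apply, smul_eq_mul]
    rw [ite_rot (b = t.1) (c = t.2.1) (a = t.2.2) v.1,
      ite_rot (b = t.2.2) (c = t.1) (a = t.2.1) v.1,
      ite_rot (b = t.2.1) (c = t.2.2) (a = t.1) v.1]
    linear_combination
      (-(if a = t.1 then if b = t.2.1 then if c = t.2.2 then v.1 else 0 else 0 else 0 : ℂ)) * hj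


end TernaryAux


-- ===== the representation =====

namespace TernaryAux

variable {N : ℕ} {j : ℂ}

/-- the free algebra mapped to the model -/
noncomputable def F (j : ℂ) (N : ℕ) : FreeAlgebra ℂ (Fin N) →ₐ[ℂ] Module.End ℂ (V N) :=
  FreeAlgebra.lift ℂ (M j)

lemma F_rel (hj : j ^ 3 = 1) : ∀ ⦃x y : FreeAlgebra ℂ (Fin N)⦄,
    ternaryRel j N x y → F j N x = F j N y := by
  rintro x y ⟨a, b, c⟩
  rw [map_mul, map_mul, map_smul, map_mul, map_mul]
  simp only [F, FreeAlgebra.lift_ι_apply]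
  exact M_rel hj a b c

/-- the representation of the ternary Grassmann algebra on the model -/
noncomputable def phi (hj : j ^ 3 = 1) (N : ℕ) :
    RingQuot (ternaryRel j N) →ₐ[ℂ] Module.End ℂ (V N) :=
  RingQuot.liftAlgHom ℂ ⟨F j N, F_rel hj⟩

lemma phi_theta (hj : j ^ 3 = 1) (a : Fin N) : phi hj N (theta j N a) = M j a := by
  rw [theta, phi, RingQuot.liftAlgHom_mkAlgHom_apply]
  simp [F]

/-- the triple product of generators -/
noncomputable def Th (j : ℂ) (N : ℕ) (t : T N) : RingQuot (ternaryRel j N) :=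
  theta j N t.1 * theta j N t.2.1 * theta j N t.2.2

lemma Th_rel (t : T N) : Th j N t = j • Th j N (rot t) := by
  rw [Th, Th, rot, theta, theta, theta, ← map_mul, ← map_mul, ← map_mul, ← map_mul,
    RingQuot.mkAlgHom_rel ℂ (ternaryRel.rel t.1 t.2.1 t.2.2), map_smul, map_mul, map_mul]

lemma Th_diag (hj1 : j ≠ 1) {t : T N} (ht : diag t) : Th j N t = 0 := by
  obtain ⟨a, b, c⟩ := t
  obtain ⟨h1, h2⟩ := ht
  simp only at h1 h2
  subst h1; subst h2
  have h := Th_rel (j := j) (N := N) (a, a, a)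
  rw [show rot (a, a, a) = (a, a, a) from rfl] at h
  have h2 : ((1 : ℂ) - j) • Th j N (a, a, a) = 0 := by
    have hs : ((1 : ℂ) - j) • Th j N (a, a, a)
        = Th j N (a, a, a) - j • Th j N (a, a, a) := by
      module
    rw [hs, ← h, sub_self]
  rcases smul_eq_zero.mp h2 with h3 | h3
  · exact absurd (sub_eq_zero.mp h3).symm hj1
  · exact h3

/-- the first basis vector of the model -/
def E1 (N : ℕ) : V N := (1, 0, 0, 0)

/-- the model vector associated to a triple -/
noncomputable def Cv (j : ℂ) {N : ℕ} (t : T N) : V N :=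
  (M j t.1) ((M j t.2.1) ((M j t.2.2) (E1 N)))

/-- evaluation of the representation at `E1`, as a linear map -/
noncomputable def Lm (hj : j ^ 3 = 1) (N : ℕ) : RingQuot (ternaryRel j N) →ₗ[ℂ] V N where
  toFun g := (phi hj N g) (E1 N)
  map_add' x y := by simp
  map_smul' c x := by simp

lemma Lm_Th (hj : j ^ 3 = 1) (t : T N) : Lm hj N (Th j N t) = Cv j t := by
  simp only [Lm, Th, LinearMap.coe_mk, AddHom.coe_mk, map_mul, phi_theta hj]
  rfl

lemma Cv_rel (hj : j ^ 3 = 1) (t : T N) : Cv j t = j • Cv j (rot t) := by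
  have h := LinearMap.congr_fun (M_rel hj t.1 t.2.1 t.2.2) (E1 N)
  simp only [Module.End.mul_apply, LinearMap.smul_apply] at h
  exact h

lemma Cv_diag (hj : j ^ 3 = 1) (hj1 : j ≠ 1) {t : T N} (ht : diag t) : Cv j t = 0 := by
  obtain ⟨a, b, c⟩ := t
  obtain ⟨h1, h2⟩ := ht
  simp only at h1 h2
  subst h1; subst h2
  have h := Cv_rel hj (j := j) (N := N) (a, a, a)
  rw [show rot (a, a, a) = (a, a, a) from rfl] at h
  have h2 : ((1 : ℂ) - j) • Cv j (a, a, a) = 0 := by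
    have hs : ((1 : ℂ) - j) • Cv j (a, a, a) = Cv j (a, a, a) - j • Cv j (a, a, a) := by
      module
    rw [hs, ← h, sub_self]
  rcases smul_eq_zero.mp h2 with h3 | h3
  · exact absurd (sub_eq_zero.mp h3).symm hj1
  · exact h3

lemma Cv_eval (t t' : T N) : (Cv j t).2.2.2 t' =
    (if t.1 = t'.1 then if t.2.1 = t'.2.1 then if t.2.2 = t'.2.2 then 1 else 0 else 0 else 0)
  + j * (if t.1 = t'.2.2 then if t.2.1 = t'.1 then if t.2.2 = t'.2.1 then 1 else 0 else 0 else 0)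
  + j ^ 2 * (if t.1 = t'.2.1 then if t.2.1 = t'.2.2 then if t.2.2 = t'.1 then 1 else 0 else 0 else 0) := by
  simp [Cv, M, E1]

lemma ite3_eq_zero {P Q R : Prop} [Decidable P] [Decidable Q] [Decidable R]
    (h : ¬ (P ∧ Q ∧ R)) :
    (if P then if Q then if R then (1 : ℂ) else 0 else 0 else 0) = 0 := by
  split_ifs with p q r
  · exact absurd ⟨p, q, r⟩ h
  all_goals rfl

lemma Cv_eval_self {s : T N} (hs : ¬ diag s) : (Cv j s).2.2.2 s = 1 := by
  have hA : ¬ (s.1 = s.2.2 ∧ s.2.1 = s.1 ∧ s.2.2 = s.2.1) :=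
    fun hc => hs ⟨hc.2.1.symm, hc.2.2.symm⟩
  have hB : ¬ (s.1 = s.2.1 ∧ s.2.1 = s.2.2 ∧ s.2.2 = s.1) :=
    fun hc => hs ⟨hc.1, hc.2.1⟩
  rw [Cv_eval, if_pos rfl, if_pos rfl, if_pos rfl, ite3_eq_zero hA, ite3_eq_zero hB]
  ring

lemma Cv_eval_ne {s s' : T N} (hs : s ∈ S N) (hs' : s' ∈ S N) (hne : s ≠ s') :
    (Cv j s).2.2.2 s' = 0 := by
  obtain ⟨hd, ho⟩ := mem_S.mp hs
  obtain ⟨hd', ho'⟩ := mem_S.mp hs'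
  have c1 : ¬ (s.1 = s'.1 ∧ s.2.1 = s'.2.1 ∧ s.2.2 = s'.2.2) := by
    rintro ⟨h1, h2, h3⟩
    exact hne (Prod.ext h1 (Prod.ext h2 h3))
  have c2 : ¬ (s.1 = s'.2.2 ∧ s.2.1 = s'.1 ∧ s.2.2 = s'.2.1) := by
    rintro ⟨h1, h2, h3⟩
    have hr : s' = rot s := Prod.ext h2.symm (Prod.ext h3.symm h1.symm)
    rw [hr, omin_rot, ho] at ho'
    exact hne (ho'.trans hr.symm)
  have c3 : ¬ (s.1 = s'.2.1 ∧ s.2.1 = s'.2.2 ∧ s.2.2 = s'.1) := by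
    rintro ⟨h1, h2, h3⟩
    have hr : s' = rot (rot s) := Prod.ext h3.symm (Prod.ext h1.symm h2.symm)
    rw [hr, omin_rot, omin_rot, ho] at ho'
    exact hne (ho'.trans hr.symm)
  rw [Cv_eval, ite3_eq_zero c1, ite3_eq_zero c2, ite3_eq_zero c3]
  ring


/-- projection onto the degree-3 coordinate at a triple `t` -/
def proj3 (N : ℕ) (t : T N) : V N →ₗ[ℂ] ℂ where
  toFun w := w.2.2.2 t
  map_add' x y := by simp
  map_smul' c x := by simp

lemma Cv_indep : LinearIndependent ℂ (fun s : (S N) => Cv j (s : T N)) := by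
  classical
  rw [Fintype.linearIndependent_iff]
  intro g hg s0
  have h := congrArg (proj3 N (s0 : T N)) hg
  rw [map_sum, map_zero] at h
  have hterm : ∀ s : (S N),
      proj3 N (s0 : T N) (g s • Cv j (s : T N)) = if s = s0 then g s else 0 := by
    intro s
    rw [map_smul, smul_eq_mul]
    by_cases hcase : s = s0
    · subst hcase
      have h1 : proj3 N (s : T N) (Cv j (s : T N)) = 1 :=
        Cv_eval_self (mem_S.mp s.2).1
      rw [if_pos rfl, h1, mul_one]
    · have h0 : proj3 N (s0 : T N) (Cv j (s : T N)) = 0 :=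
        Cv_eval_ne s.2 s0.2 (fun hc => hcase (Subtype.ext hc))
      rw [if_neg hcase, h0, mul_zero]
  rw [Finset.sum_congr rfl (fun s _ => hterm s), Finset.sum_ite_eq' Finset.univ s0 g,
    if_pos (Finset.mem_univ s0)] at h
  exact h

lemma span_Cv (hj : j ^ 3 = 1) (hj1 : j ≠ 1) :
    Submodule.span ℂ (Set.range fun t : T N => Cv j t)
      = Submodule.span ℂ (Set.range fun s : (S N) => Cv j (s : T N)) := by
  apply le_antisymm
  · rw [Submodule.span_le]
    rintro _ ⟨t, rfl⟩
    show Cv j t ∈ _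
    by_cases hd : diag t
    · rw [Cv_diag hj hj1 hd]; exact Submodule.zero_mem _
    · have hmem : omin t ∈ S N := mem_S.mpr ⟨not_diag_omin hd, omin_idem⟩
      have hsub : Cv j (omin t) ∈
          Submodule.span ℂ (Set.range fun s : (S N) => Cv j (s : T N)) :=
        Submodule.subset_span ⟨⟨omin t, hmem⟩, rfl⟩
      rcases omin_mem t with hcase | hcase | hcase
      · rw [← hcase]; exact hsub
      · rw [Cv_rel hj t, ← hcase]
        exact Submodule.smul_mem _ j hsub
      · rw [Cv_rel hj t, Cv_rel hj (rot t), ← hcase]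
        exact Submodule.smul_mem _ j (Submodule.smul_mem _ j hsub)
  · rw [Submodule.span_le]
    rintro _ ⟨s, rfl⟩
    exact Submodule.subset_span ⟨s, rfl⟩

lemma span_Th_le (hj : j ^ 3 = 1) (hj1 : j ≠ 1) :
    Submodule.span ℂ (Set.range fun t : T N => Th j N t)
      ≤ Submodule.span ℂ (Set.range fun s : (S N) => Th j N (s : T N)) := by
  rw [Submodule.span_le]
  rintro _ ⟨t, rfl⟩
  show Th j N t ∈ _
  by_cases hd : diag t
  · rw [Th_diag hj1 hd]; exact Submodule.zero_mem _
  · have hmem : omin t ∈ S N := mem_S.mpr ⟨not_diag_omin hd, omin_idem⟩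
    have hsub : Th j N (omin t) ∈
        Submodule.span ℂ (Set.range fun s : (S N) => Th j N (s : T N)) :=
      Submodule.subset_span ⟨⟨omin t, hmem⟩, rfl⟩
    rcases omin_mem t with hcase | hcase | hcase
    · rw [← hcase]; exact hsub
    · rw [Th_rel t, ← hcase]
      exact Submodule.smul_mem _ j hsub
    · rw [Th_rel t, Th_rel (rot t), ← hcase]
      exact Submodule.smul_mem _ j (Submodule.smul_mem _ j hsub)

end TernaryAux

open TernaryAux in
/-- in the ternary Grassmann algebra `G_N`, the `ℂ`-subspace spanned by
all ternary products `θ a * θ b * θ c` has dimension `(N³ − N)/3`. -/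
theorem ternaryGrassmann_span_ternary_products_finrank
    (N : ℕ) (j : ℂ) (hj : j ^ 3 = 1) (hj1 : j ≠ 1) :
    Module.finrank ℂ
      (Submodule.span ℂ (Set.range fun t : Fin N × Fin N × Fin N =>
        theta j N t.1 * theta j N t.2.1 * theta j N t.2.2)) = (N ^ 3 - N) / 3 := by
  classical
  have hfun : (fun t : Fin N × Fin N × Fin N =>
      theta j N t.1 * theta j N t.2.1 * theta j N t.2.2) = fun t : T N => Th j N t := rfl
  rw [hfun]
  set p := Submodule.span ℂ (Set.range fun t : T N => Th j N t) with hp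
  -- upper bound
  have fdq : FiniteDimensional ℂ
      (Submodule.span ℂ (Set.range fun s : (S N) => Th j N (s : T N))) :=
    FiniteDimensional.span_of_finite ℂ (Set.finite_range _)
  have up : Module.finrank ℂ p ≤ (S N).card := by
    refine le_trans (Submodule.finrank_mono (span_Th_le hj hj1)) ?_
    refine le_trans (finrank_span_le_card _) ?_
    rw [Set.toFinset_range]
    exact le_trans Finset.card_image_le (by rw [Finset.card_univ, Fintype.card_coe])
  -- lower bound
  have fdp : FiniteDimensional ℂ p :=
    FiniteDimensional.span_of_finite ℂ (Set.finite_range _)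
  have hmap : p.map (Lm hj N) = Submodule.span ℂ (Set.range fun t : T N => Cv j t) := by
    rw [hp, Submodule.map_span, ← Set.range_comp]
    congr 1
    have : (Lm hj N) ∘ (fun t : T N => Th j N t) = fun t : T N => Cv j t :=
      funext fun t => Lm_Th hj t
    rw [this]
  have low : (S N).card ≤ Module.finrank ℂ p := by
    have h1 := Submodule.finrank_map_le (Lm hj N) p
    rw [hmap, span_Cv hj hj1, finrank_span_eq_card Cv_indep, Fintype.card_coe] at h1
    exact h1
  have key : Module.finrank ℂ p = (S N).card := le_antisymm up low
  have hcard := card_S N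
  rw [key]
  generalize hK : N ^ 3 = K at hcard
  omega
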